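/- For a round-robin sequence with two agents and positive utilities, if agent i picks at positions k and agent j's t-th picked item is denoted t_s, then for every s ≥ 2, agent i's (s−1)-th pick s_{s−1} satisfies s_{s−1} ≿_i t_s; consequently p(i) responsively dominates p(j) \ {t_1}. -/

import Mathlib

open Finset

/-- Sequential allocation: each agent on their turn picks a remaining item of maximal utility. -/
def seqValid19 {A O : Type*} [DecidableEq O] (u : A → O → ℝ) :
    List A → List O → Finset O → Prop
  | [], [], _ => True
  | a :: s, o :: ps, rem =>
      o ∈ rem ∧ (∀ o' ∈ rem, u a o' ≤ u a o) ∧ seqValid19 u s ps (rem.erase o)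
  | _, _, _ => False

/-- The list of items picked by agent `i`, in picking order. -/
def picksOf19 {A O : Type*} [DecidableEq A] (seq : List A) (picks : List O) (i : A) :
    List O :=
  (seq.zip picks).filterMap (fun x => if x.1 = i then some x.2 else none)

section Aux19
set_option linter.unusedSectionVars false
variable {A O : Type*} [DecidableEq A] [DecidableEq O]

lemma sv_len (u : A → O → ℝ) : ∀ (seq : List A) (picks : List O) (rem : Finset O),
    seqValid19 u seq picks rem → picks.length = seq.length
  | [], [], _, _ => rfl
  | [], _ :: _, _, h => h.elim
  | _ :: _, [], _, h => h.elim
  | a :: s, o :: ps, rem, h => by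
      simp only [List.length_cons]
      exact congrArg (· + 1) (sv_len u s ps (rem.erase o) h.2.2)

lemma sv_mem (u : A → O → ℝ) : ∀ (seq : List A) (picks : List O) (rem : Finset O),
    seqValid19 u seq picks rem → ∀ x ∈ picks, x ∈ rem
  | [], [], _, _ => by simp
  | [], _ :: _, _, h => h.elim
  | _ :: _, [], _, h => h.elim
  | a :: s, o :: ps, rem, h => by
      intro x hx
      rcases List.mem_cons.1 hx with rfl | hx
      · exact h.1
      · exact Finset.mem_of_mem_erase (sv_mem u s ps _ h.2.2 x hx)

lemma sv_nodup (u : A → O → ℝ) : ∀ (seq : List A) (picks : List O) (rem : Finset O),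
    seqValid19 u seq picks rem → picks.Nodup
  | [], [], _, _ => List.nodup_nil
  | [], _ :: _, _, h => h.elim
  | _ :: _, [], _, h => h.elim
  | a :: s, o :: ps, rem, h => by
      refine List.nodup_cons.2 ⟨fun hmem => ?_, sv_nodup u s ps _ h.2.2⟩
      exact (Finset.ne_of_mem_erase (sv_mem u s ps _ h.2.2 o hmem)) rfl

lemma sv_pref (u : A → O → ℝ) : ∀ (seq : List A) (picks : List O) (rem : Finset O),
    seqValid19 u seq picks rem → ∀ p q, p ≤ q →
    ∀ (hq : q < picks.length) (hp : p < seq.length) (hp' : p < picks.length),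
      u (seq.get ⟨p, hp⟩) (picks.get ⟨q, hq⟩) ≤ u (seq.get ⟨p, hp⟩) (picks.get ⟨p, hp'⟩)
  | [], [], _, _ => by intro p q _ hq; simp at hq
  | [], _ :: _, _, h => h.elim
  | _ :: _, [], _, h => h.elim
  | a :: s, o :: ps, rem, h => by
      intro p q hpq hq hp hp'
      match p, q with
      | 0, 0 => simp
      | 0, q + 1 =>
          simp only [List.get_cons_succ, List.get]
          exact h.2.1 _ (Finset.mem_of_mem_erase
            (sv_mem u s ps _ h.2.2 _ (List.get_mem _ _)))
      | p + 1, q + 1 =>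
          simpa using sv_pref u s ps _ h.2.2 p q (Nat.succ_le_succ_iff.1 hpq)
            (Nat.succ_lt_succ_iff.1 hq) (Nat.succ_lt_succ_iff.1 hp)
            (Nat.succ_lt_succ_iff.1 hp')

def evens : List O → List O
  | [] => []
  | [a] => [a]
  | a :: _ :: l => a :: evens l

lemma evens_cons (a : O) (l : List O) : evens (a :: l) = a :: evens l.tail := by
  cases l <;> simp [evens]

lemma evens_sublist : ∀ (l : List O), List.Sublist (evens l) l
  | [] => List.Sublist.refl _
  | [a] => List.Sublist.refl _
  | a :: b :: l => (evens_sublist l).cons _ |>.cons₂ _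

lemma evens_length : ∀ (l : List O), (evens l).length = (l.length + 1) / 2
  | [] => by simp [evens]
  | [a] => by simp [evens]
  | a :: b :: l => by
      simp only [evens, List.length_cons, evens_length l]
      omega

lemma evens_get : ∀ (l : List O) (m : ℕ) (h : m < (evens l).length),
    ∃ h2 : 2 * m < l.length, (evens l).get ⟨m, h⟩ = l.get ⟨2 * m, h2⟩
  | [], m, h => by simp [evens] at h
  | [a], 0, h => ⟨by simp, rfl⟩
  | [a], m + 1, h => by simp [evens] at h
  | a :: b :: l, 0, h => ⟨by simp, rfl⟩
  | a :: b :: l, m + 1, h => by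
      have h' : m < (evens l).length := by simpa [evens] using h
      obtain ⟨h2, e⟩ := evens_get l m h'
      refine ⟨by simp; omega, ?_⟩
      have : (evens (a :: b :: l)).get ⟨m + 1, h⟩ = (evens l).get ⟨m, h'⟩ := rfl
      rw [this, e]
      have : 2 * (m + 1) = (2 * m) + 1 + 1 := by ring
      simp only [this, List.get_cons_succ]

lemma picks_rr (π : Equiv.Perm (Fin 2)) :
    ∀ (seq : List (Fin 2)) (picks : List O), picks.length = seq.length →
    (∀ k (hk : k < seq.length),
      seq.get ⟨k, hk⟩ = π ⟨k % 2, Nat.mod_lt _ (by norm_num)⟩) →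
    picksOf19 seq picks (π 0) = evens picks ∧
    picksOf19 seq picks (π 1) = evens picks.tail
  | [], [], _, _ => by simp [picksOf19, evens]
  | [], _ :: _, hl, _ => by simp at hl
  | _ :: _, [], hl, _ => by simp at hl
  | [a], [o], _, hRR => by
      have ha : a = π 0 := by simpa using hRR 0 (by simp)
      have hne : π 1 ≠ π 0 := fun h => absurd (π.injective h) (by decide)
      subst ha
      exact ⟨by simp [picksOf19, evens], by simp [picksOf19, evens, hne]⟩
  | [a], _ :: _ :: _, hl, _ => by simp at hl
  | _ :: _ :: _, [_], hl, _ => by simp at hl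
  | a :: b :: s, o1 :: o2 :: ps, hl, hRR => by
      have hl' : ps.length = s.length := by simpa using hl
      have ha : a = π 0 := by simpa using hRR 0 (by simp)
      have hb : b = π 1 := by simpa using hRR 1 (by simp)
      have hRR' : ∀ k (hk : k < s.length),
          s.get ⟨k, hk⟩ = π ⟨k % 2, Nat.mod_lt _ (by norm_num)⟩ := by
        intro k hk
        have h2 : k + 2 < (a :: b :: s).length := by simp; omega
        have e : (a :: b :: s).get ⟨k + 2, h2⟩ = s.get ⟨k, hk⟩ := rfl
        have := hRR (k + 2) h2
        rw [e] at this
        rw [this]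
        congr 1
        exact Fin.ext (Nat.add_mod_right k 2)
      obtain ⟨ih0, ih1⟩ := picks_rr π s ps hl' hRR'
      have hne : π 1 ≠ π 0 := fun h => absurd (π.injective h) (by decide)
      have hne' : π 0 ≠ π 1 := fun h => hne h.symm
      subst ha; subst hb
      constructor
      · have e0 : picksOf19 (π 0 :: π 1 :: s) (o1 :: o2 :: ps) (π 0)
            = o1 :: picksOf19 s ps (π 0) := by
          simp [picksOf19, hne]
        rw [e0, ih0]; rfl
      · have e1 : picksOf19 (π 0 :: π 1 :: s) (o1 :: o2 :: ps) (π 1)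
            = o2 :: picksOf19 s ps (π 1) := by
          simp [picksOf19, hne']
        rw [e1, ih1]
        exact (evens_cons o2 ps).symm

lemma key_ineq (u : Fin 2 → O → ℝ) (π : Equiv.Perm (Fin 2)) (seq : List (Fin 2))
    (picks : List O)
    (hRR : ∀ k (hk : k < seq.length),
      seq.get ⟨k, hk⟩ = π ⟨k % 2, Nat.mod_lt _ (by norm_num)⟩)
    (rem : Finset O) (hvalid : seqValid19 u seq picks rem)
    (i : Fin 2) (c : Fin 2) (hic : π c = i)
    (p q : ℕ) (hpq : p ≤ q) (hq : q < picks.length) (hpc : p % 2 = (c : ℕ)) :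
    ∀ hp' : p < picks.length,
      u i (picks.get ⟨q, hq⟩) ≤ u i (picks.get ⟨p, hp'⟩) := by
  intro hp'
  have hlen : picks.length = seq.length := sv_len u seq picks rem hvalid
  have hp : p < seq.length := hlen ▸ hp'
  have hget : seq.get ⟨p, hp⟩ = i := by
    rw [hRR p hp, ← hic]
    congr 1
    exact Fin.ext (by simpa using hpc)
  have := sv_pref u seq picks rem hvalid p q hpq hq hp hp'
  rwa [hget] at this

lemma part2_core (u : Fin 2 → O → ℝ) (i : Fin 2) (Li Lj : List O)
    (hndi : Li.Nodup)
    (h1 : ∀ s : ℕ, 1 ≤ s → ∀ hs : s < Lj.length,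
      ∃ hs' : s - 1 < Li.length, u i (Lj.get ⟨s, hs⟩) ≤ u i (Li.get ⟨s - 1, hs'⟩)) :
    ∀ t₁ : O, Lj.head? = some t₁ →
      ∃ f : O → O,
        Set.InjOn f ((Lj.toFinset.erase t₁ : Finset O) : Set O) ∧
        ∀ x ∈ Lj.toFinset.erase t₁, f x ∈ Li.toFinset ∧ u i x ≤ u i (f x) := by
  intro t₁ ht
  have key : ∀ x ∈ Lj.toFinset.erase t₁,
      ∃ (hlt : Lj.idxOf x < Lj.length) (h' : Lj.idxOf x - 1 < Li.length),
        1 ≤ Lj.idxOf x ∧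
        Li.getD (Lj.idxOf x - 1) x = Li.get ⟨Lj.idxOf x - 1, h'⟩ ∧
        u i x ≤ u i (Li.get ⟨Lj.idxOf x - 1, h'⟩) := by
    intro x hx
    have hx1 : x ≠ t₁ := Finset.ne_of_mem_erase hx
    have hx2 : x ∈ Lj := List.mem_toFinset.1 (Finset.mem_of_mem_erase hx)
    have hlt : Lj.idxOf x < Lj.length := List.idxOf_lt_length_iff.2 hx2
    have h1i : 1 ≤ Lj.idxOf x := by
      rcases Lj with _ | ⟨a, L⟩
      · simp at ht
      · have ha : a = t₁ := by simpa using ht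
        subst ha
        rw [List.idxOf_cons_ne _ (fun h => hx1 h.symm)]
        omega
    obtain ⟨h', hle⟩ := h1 (Lj.idxOf x) h1i hlt
    rw [List.idxOf_get hlt] at hle
    exact ⟨hlt, h', h1i, List.getD_eq_getElem Li x h', hle⟩
  refine ⟨fun x => Li.getD (Lj.idxOf x - 1) x, ?_, ?_⟩
  · intro x hx y hy hfxy
    rw [Finset.mem_coe] at hx hy
    obtain ⟨hltx, hx', h1x, hgx, _⟩ := key x hx
    obtain ⟨hlty, hy', h1y, hgy, _⟩ := key y hy
    simp only at hfxy
    rw [hgx, hgy] at hfxy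
    have hv := congrArg Fin.val ((hndi.get_inj_iff).1 hfxy)
    simp only at hv
    have hidx : Lj.idxOf x = Lj.idxOf y := by omega
    rw [← List.idxOf_get hltx, ← List.idxOf_get hlty]
    exact congrArg Lj.get (Fin.ext hidx)
  · intro x hx
    obtain ⟨hltx, hx', _, hgx, hle⟩ := key x hx
    refine ⟨?_, ?_⟩
    · simp only
      rw [hgx]
      exact List.mem_toFinset.2 (List.get_mem _ _)
    · simp only
      rw [hgx]
      exact hle
end Aux19

/-- For a round-robin sequence with two agents and positive utilities: for every `s ≥ 2`
(1-indexed), agent `i`'s `(s-1)`-th pick is weakly preferred by `i` to agent `j`'s `s`-th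
pick; consequently `p(i)` responsively dominates `p(j)` minus `j`'s first pick `t₁`. -/

theorem stmt19 {O : Type*} [Fintype O] [DecidableEq O]
    (u : Fin 2 → O → ℝ) (hpos : ∀ i o, 0 < u i o)
    (π : Equiv.Perm (Fin 2))
    (seq : List (Fin 2))
    (hRR : ∀ k (hk : k < seq.length),
      seq.get ⟨k, hk⟩ = π ⟨k % 2, Nat.mod_lt _ (by norm_num)⟩)
    (picks : List O) (hvalid : seqValid19 u seq picks Finset.univ) :
    ∀ i j : Fin 2, i ≠ j →
      (∀ s : ℕ, 1 ≤ s → ∀ hs : s < (picksOf19 seq picks j).length,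
        ∃ hs' : s - 1 < (picksOf19 seq picks i).length,
          u i ((picksOf19 seq picks j).get ⟨s, hs⟩) ≤
            u i ((picksOf19 seq picks i).get ⟨s - 1, hs'⟩)) ∧
      (∀ t₁ : O, (picksOf19 seq picks j).head? = some t₁ →
        ∃ f : O → O,
          Set.InjOn f (((picksOf19 seq picks j).toFinset.erase t₁ : Finset O) : Set O) ∧
          ∀ x ∈ (picksOf19 seq picks j).toFinset.erase t₁,
            f x ∈ (picksOf19 seq picks i).toFinset ∧ u i x ≤ u i (f x)) := by
  intro i j hij
  have hlen : picks.length = seq.length := sv_len u seq picks _ hvalid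
  obtain ⟨h0, h1⟩ := picks_rr π seq picks hlen hRR
  have hnd : picks.Nodup := sv_nodup u seq picks _ hvalid
  have hnd0 : (evens picks).Nodup := List.Nodup.sublist (evens_sublist picks) hnd
  have hnd1 : (evens picks.tail).Nodup :=
    List.Nodup.sublist ((evens_sublist _).trans (List.tail_sublist _)) hnd
  have htl : picks.tail.length = picks.length - 1 := List.length_tail
  have hcase : (i = π 0 ∧ j = π 1) ∨ (i = π 1 ∧ j = π 0) := by
    have hi := π.apply_symm_apply i
    have hj := π.apply_symm_apply j
    have hd : π.symm i ≠ π.symm j := fun h => hij (by rw [← hi, ← hj, h])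
    have h2 : ∀ a : Fin 2, a = 0 ∨ a = 1 := by decide
    rcases h2 (π.symm i) with hi' | hi' <;> rcases h2 (π.symm j) with hj' | hj'
    · exact absurd (hi'.trans hj'.symm) hd
    · left; rw [← hi, ← hj, hi', hj']; exact ⟨rfl, rfl⟩
    · right; rw [← hi, ← hj, hi', hj']; exact ⟨rfl, rfl⟩
    · exact absurd (hi'.trans hj'.symm) hd
  rcases hcase with ⟨hi, hj⟩ | ⟨hi, hj⟩
  · -- i = π 0, j = π 1
    have hLi : picksOf19 seq picks i = evens picks := by rw [hi]; exact h0
    have hLj : picksOf19 seq picks j = evens picks.tail := by rw [hj]; exact h1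
    have part1 : ∀ s : ℕ, 1 ≤ s → ∀ hs : s < (picksOf19 seq picks j).length,
        ∃ hs' : s - 1 < (picksOf19 seq picks i).length,
          u i ((picksOf19 seq picks j).get ⟨s, hs⟩) ≤
            u i ((picksOf19 seq picks i).get ⟨s - 1, hs'⟩) := by
      intro s h1s
      rw [hLi, hLj]
      intro hs
      obtain ⟨h2, e2⟩ := evens_get picks.tail s hs
      have h2' : 2 * s + 1 < picks.length := by omega
      have et : picks.tail.get ⟨2 * s, h2⟩ = picks.get ⟨2 * s + 1, h2'⟩ := by
        simp [List.get_eq_getElem, List.getElem_tail]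
      have hs' : s - 1 < (evens picks).length := by rw [evens_length]; omega
      refine ⟨hs', ?_⟩
      obtain ⟨h3, e3⟩ := evens_get picks (s - 1) hs'
      rw [e2, et, e3]
      exact key_ineq u π seq picks hRR _ hvalid i 0 hi.symm (2 * (s - 1)) (2 * s + 1)
        (by omega) h2' (by omega) h3
    refine ⟨part1, part2_core u i _ _ ?_ part1⟩
    rw [hLi]; exact hnd0
  · -- i = π 1, j = π 0
    have hLi : picksOf19 seq picks i = evens picks.tail := by rw [hi]; exact h1
    have hLj : picksOf19 seq picks j = evens picks := by rw [hj]; exact h0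
    have part1 : ∀ s : ℕ, 1 ≤ s → ∀ hs : s < (picksOf19 seq picks j).length,
        ∃ hs' : s - 1 < (picksOf19 seq picks i).length,
          u i ((picksOf19 seq picks j).get ⟨s, hs⟩) ≤
            u i ((picksOf19 seq picks i).get ⟨s - 1, hs'⟩) := by
      intro s h1s
      rw [hLi, hLj]
      intro hs
      obtain ⟨h2, e2⟩ := evens_get picks s hs
      have hs' : s - 1 < (evens picks.tail).length := by rw [evens_length, htl]; omega
      obtain ⟨h3, e3⟩ := evens_get picks.tail (s - 1) hs'
      have h3' : 2 * (s - 1) + 1 < picks.length := by omega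
      have et : picks.tail.get ⟨2 * (s - 1), h3⟩ = picks.get ⟨2 * (s - 1) + 1, h3'⟩ := by
        simp [List.get_eq_getElem, List.getElem_tail]
      refine ⟨hs', ?_⟩
      rw [e2, e3, et]
      exact key_ineq u π seq picks hRR _ hvalid i 1 hi.symm (2 * (s - 1) + 1) (2 * s)
        (by omega) h2 (by omega) _
    refine ⟨part1, part2_core u i _ _ ?_ part1⟩
    rw [hLi]; exact hnd1
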